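/- For every prime p with p ≡ 1 (mod 20) and p ∤ 10, if 10 divides Ind_p(−100) then 20 divides Ind_p(−100); consequently no positive integer congruent to 10 modulo 20 is in the image of the map p ↦ Ind_p(−100). -/

import Mathlib

-- auxiliary: under the hypotheses, key facts about the index

lemma aux_neg100_ne_zero {p : ℕ} [Fact p.Prime] (hp10 : ¬ p ∣ 10) :
    (-100 : ZMod p) ≠ 0 := by
  intro h
  have h' : ((-100 : ℤ) : ZMod p) = 0 := by push_cast; exact_mod_cast h
  rw [ZMod.intCast_zmod_eq_zero_iff_dvd] at h'
  have h100 : (p : ℤ) ∣ 100 := (dvd_neg.mp h')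
  have hpn : p ∣ 100 := by exact_mod_cast h100
  have : p ∣ 10 * 10 := by norm_num at hpn ⊢; exact hpn
  rcases (Fact.out : p.Prime).dvd_mul.mp this with h | h <;> exact hp10 h

lemma aux_four_dvd {p : ℕ} [Fact p.Prime] (h20 : p % 20 = 1) (hp10 : ¬ p ∣ 10) :
    4 ∣ (p - 1) / orderOf (-100 : ZMod p) := by
  have hp : p.Prime := Fact.out
  have hp2 : p ≠ 2 := by rintro rfl; exact hp10 (by norm_num)
  have hne : (-100 : ZMod p) ≠ 0 := aux_neg100_ne_zero hp10
  have h4 : p % 4 = 1 := by omega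
  have h5 : p % 5 = 1 := by omega
  -- get i with i^2 = -1
  obtain ⟨i, hi⟩ : IsSquare (-1 : ZMod p) :=
    (ZMod.exists_sq_eq_neg_one_iff).mpr (by omega)
  -- get s with s^2 = 5
  have hsq5 : IsSquare ((5 : ℕ) : ZMod p) := by
    haveI : Fact (Nat.Prime 5) := ⟨by norm_num⟩
    rw [ZMod.exists_sq_eq_prime_iff_of_mod_four_eq_one h4 (by norm_num)]
    have : ((p : ℕ) : ZMod 5) = 1 := by
      rw [← ZMod.natCast_mod, h5]; norm_num
    rw [this]; exact IsSquare.one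
  obtain ⟨s, hs⟩ := hsq5
  have hs' : s * s = (5 : ZMod p) := by exact_mod_cast hs.symm
  have hi' : i * i = (-1 : ZMod p) := hi.symm
  set c : ZMod p := s * (1 + i) with hc
  have e1 : c ^ 2 = 10 * i := by
    rw [hc]
    linear_combination (1 + i)^2 * hs' + 5 * hi'
  have e2 : c ^ 4 = -100 := by
    linear_combination (c ^ 2 + 10 * i) * e1 + 100 * hi'
  have hc0 : c ≠ 0 := by
    intro h
    apply hne
    rw [← e2, h]; ring
  have hdvd4 : 4 ∣ p - 1 := by omega
  have hpow : (-100 : ZMod p) ^ ((p - 1) / 4) = 1 := by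
    rw [← e2, ← pow_mul]
    have : 4 * ((p - 1) / 4) = p - 1 := Nat.mul_div_cancel' hdvd4
    rw [this, ZMod.pow_card_sub_one_eq_one hc0]
  have hd : orderOf (-100 : ZMod p) ∣ (p - 1) / 4 := orderOf_dvd_of_pow_eq_one hpow
  obtain ⟨k, hk⟩ := hd
  have hdpos : 0 < orderOf (-100 : ZMod p) := by
    have h2le := hp.two_le
    exact (isOfFinOrder_iff_pow_eq_one.mpr ⟨p - 1, by have := hp.two_le; omega, ZMod.pow_card_sub_one_eq_one hne⟩).orderOf_pos
  have hp1 : p - 1 = orderOf (-100 : ZMod p) * (4 * k) := by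
    rw [← Nat.mul_div_cancel' hdvd4, hk]; ring
  rw [hp1, Nat.mul_div_cancel_left _ hdpos]
  exact ⟨k, rfl⟩

lemma aux_mod20 {p : ℕ} [Fact p.Prime] (hp10 : ¬ p ∣ 10)
    (h10 : 10 ∣ (p - 1) / orderOf (-100 : ZMod p)) : p % 20 = 1 := by
  have hp : p.Prime := Fact.out
  have hp2 : p ≠ 2 := by rintro rfl; exact hp10 (by norm_num)
  have h2le := hp.two_le
  have hne : (-100 : ZMod p) ≠ 0 := aux_neg100_ne_zero hp10
  set d := orderOf (-100 : ZMod p) with hd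
  have hdvd : d ∣ p - 1 :=
    orderOf_dvd_of_pow_eq_one (ZMod.pow_card_sub_one_eq_one hne)
  obtain ⟨m, hm⟩ := h10
  have hp1 : p - 1 = d * (10 * m) := by
    rw [← Nat.div_mul_cancel hdvd, hm]; ring
  have hodd : p % 2 = 1 := by have := hp.eq_two_or_odd; omega
  have hhalf : (p - 1) / 2 = d * (5 * m) := by
    have h2 : p - 1 = 2 * (d * (5 * m)) := by rw [hp1]; ring
    rw [h2, Nat.mul_div_cancel_left _ (by norm_num)]
  have hpow : (-100 : ZMod p) ^ (p / 2) = 1 := by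
    have hpq : p / 2 = (p - 1) / 2 := by omega
    rw [hpq, hhalf, pow_mul]
    show ((-100 : ZMod p) ^ orderOf (-100 : ZMod p)) ^ (5 * m) = 1
    rw [pow_orderOf_eq_one, one_pow]
  obtain ⟨r, hr⟩ : IsSquare (-100 : ZMod p) := (ZMod.euler_criterion p hne).mpr hpow
  have h10ne : (10 : ZMod p) ≠ 0 := by
    intro h
    exact hp10 ((ZMod.natCast_eq_zero_iff 10 p).mp (by exact_mod_cast h))
  have hneg1 : IsSquare (-1 : ZMod p) := by
    refine ⟨r / 10, ?_⟩
    field_simp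
    linear_combination hr
  have h4 : p % 4 ≠ 3 := ZMod.exists_sq_eq_neg_one_iff.mp hneg1
  have h5d : 5 ∣ p - 1 := ⟨d * (2 * m), by rw [hp1]; ring⟩
  omega

theorem stmt_6 :
    (∀ p : ℕ, p.Prime → p % 20 = 1 → ¬ p ∣ 10 →
      (10 ∣ (p - 1) / orderOf (-100 : ZMod p) → 20 ∣ (p - 1) / orderOf (-100 : ZMod p))) ∧
    ∀ n : ℕ, 0 < n → n % 20 = 10 →
      ¬ ∃ p : ℕ, p.Prime ∧ ¬ p ∣ 10 ∧ (p - 1) / orderOf (-100 : ZMod p) = n := by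
  constructor
  · intro p hp h20 hp10 h10
    haveI : Fact p.Prime := ⟨hp⟩
    have h4 := aux_four_dvd h20 hp10
    omega
  · rintro n hn hmod ⟨p, hp, hp10, hidx⟩
    haveI : Fact p.Prime := ⟨hp⟩
    have h10 : 10 ∣ (p - 1) / orderOf (-100 : ZMod p) := by rw [hidx]; omega
    have h20 := aux_mod20 hp10 h10
    have h4 := aux_four_dvd h20 hp10
    rw [hidx] at h4
    omega
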